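/- Let {ψ_i}_{i=1}^n be an orthonormal basis of ℝ^n, f ∈ ℝ^n, and 0 ≤ B < n. Then the (B+1)-st largest value among the n numbers |⟨f, ψ_i⟩| / ‖ψ_i‖₁ is a lower bound on the optimal B-term ℓ_∞ error: it is at most min over B-sparse z of ‖f − Σ_i z_i ψ_i‖_∞. -/
import Mathlib


/-- Standard inner product on `ℝ^n`. -/
noncomputable def dotp {n : ℕ} (x y : Fin n → ℝ) : ℝ := ∑ j, x j * y j

/-- The `ℓ₁` norm on `ℝ^n`. -/
noncomputable def l1Norm {n : ℕ} (x : Fin n → ℝ) : ℝ := ∑ j, |x j|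

/-- The `ℓ∞` norm on `ℝ^n`. -/
noncomputable def linfNorm {n : ℕ} (x : Fin n → ℝ) : ℝ := ⨆ j, |x j|

/-- A vector is `B`-sparse if it has at most `B` nonzero components. -/
def Sparse {n : ℕ} (B : ℕ) (z : Fin n → ℝ) : Prop :=
  ({i | z i ≠ 0} : Set (Fin n)).ncard ≤ B

/-- for an orthonormal basis `{ψ_i}` of `ℝ^n`, `f ∈ ℝ^n` and `0 ≤ B < n`,
the `(B+1)`-st largest value among the numbers `y i = |⟨f, ψ_i⟩| / ‖ψ_i‖₁` (expressed by
sorting them in nonincreasing order via a permutation `σ` and taking position `B`)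
is at most `‖f − Σ_i z_i ψ_i‖_∞` for every `B`-sparse `z`, i.e. it lower bounds the
optimal `B`-term `ℓ_∞` error. -/
theorem stmt2 {n B : ℕ} (hB : B < n) (ψ : Fin n → Fin n → ℝ)
    (horth : ∀ i k, dotp (ψ i) (ψ k) = if i = k then (1 : ℝ) else 0)
    (f : Fin n → ℝ)
    (y : Fin n → ℝ) (hy : ∀ i, y i = |dotp f (ψ i)| / l1Norm (ψ i))
    (σ : Equiv.Perm (Fin n)) (hσ : ∀ i j : Fin n, i ≤ j → y (σ j) ≤ y (σ i)) :
    ∀ z : Fin n → ℝ, Sparse B z →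
      y (σ ⟨B, hB⟩) ≤ linfNorm (fun j => f j - ∑ i, z i * ψ i j) := by
  intro z hz
  set g : Fin n → ℝ := fun j => f j - ∑ i, z i * ψ i j with hg
  haveI : Nonempty (Fin n) := ⟨⟨B, hB⟩⟩
  have hbdd : BddAbove (Set.range fun j => |g j|) := (Set.finite_range _).bddAbove
  have hle : ∀ j, |g j| ≤ linfNorm g := fun j => le_ciSup hbdd j
  have hl1pos : ∀ i, 0 < l1Norm (ψ i) := by
    intro i
    rcases (Finset.sum_nonneg fun j _ => abs_nonneg (ψ i j)).lt_or_eq with h | h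
    · exact h
    · exfalso
      have hzero : ∀ j, ψ i j = 0 := by
        intro j
        have := (Finset.sum_eq_zero_iff_of_nonneg
          (fun j _ => abs_nonneg (ψ i j))).mp h.symm j (Finset.mem_univ j)
        exact abs_eq_zero.mp this
      have h1 := horth i i
      simp [dotp, hzero] at h1
  have key : ∀ i, z i = 0 → y i ≤ linfNorm g := by
    intro i hzi
    have hdg : dotp g (ψ i) = dotp f (ψ i) := by
      simp only [dotp, hg]
      rw [Finset.sum_congr rfl (fun j _ => sub_mul (f j) _ (ψ i j)),
        Finset.sum_sub_distrib]
      have h2 : ∑ j, (∑ k, z k * ψ k j) * ψ i j = z i := by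
        rw [Finset.sum_congr rfl (fun j _ => Finset.sum_mul ..), Finset.sum_comm]
        calc ∑ k, ∑ j, z k * ψ k j * ψ i j
            = ∑ k, z k * dotp (ψ k) (ψ i) := by
              refine Finset.sum_congr rfl fun k _ => ?_
              rw [dotp, Finset.mul_sum]
              exact Finset.sum_congr rfl fun j _ => by ring
          _ = z i := by simp [horth]
      rw [h2, hzi, sub_zero]
    have habs : |dotp f (ψ i)| ≤ linfNorm g * l1Norm (ψ i) := by
      rw [← hdg, dotp, l1Norm, Finset.mul_sum]
      calc |∑ j, g j * ψ i j| ≤ ∑ j, |g j * ψ i j| := Finset.abs_sum_le_sum_abs _ _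
        _ ≤ ∑ j, linfNorm g * |ψ i j| := by
            refine Finset.sum_le_sum fun j _ => ?_
            rw [abs_mul]
            exact mul_le_mul_of_nonneg_right (hle j) (abs_nonneg _)
    rw [hy i, div_le_iff₀ (hl1pos i)]
    exact habs
  obtain ⟨j, hjB, hjz⟩ : ∃ j : Fin n, j ≤ ⟨B, hB⟩ ∧ z (σ j) = 0 := by
    by_contra hcon
    push_neg at hcon
    have hsub : (σ '' {j : Fin n | j ≤ ⟨B, hB⟩}) ⊆ {i | z i ≠ 0} := by
      rintro _ ⟨j, hj, rfl⟩
      exact hcon j hj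
    have h1 : (σ '' {j : Fin n | j ≤ ⟨B, hB⟩}).ncard = B + 1 := by
      rw [Set.ncard_image_of_injective _ σ.injective]
      have : {j : Fin n | j ≤ ⟨B, hB⟩} = ↑(Finset.Iic (⟨B, hB⟩ : Fin n)) := by
        ext j; simp
      rw [this, Set.ncard_coe_finset, Fin.card_Iic]
    have h3 := Set.ncard_le_ncard hsub (Set.toFinite _)
    have h4 := hz
    unfold Sparse at h4
    omega
  calc y (σ ⟨B, hB⟩) ≤ y (σ j) := hσ j ⟨B, hB⟩ hjB
    _ ≤ linfNorm g := key _ hjz
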